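/- arXiv:2012.13818 — 6 statements merged into one kernel-verified Lean document; each statement's English description precedes it below -/
import Mathlib

section
/- Let $L, N, \mu:[0,\lambda]\to\mathbb{R}$ be continuous with positive bounds $L_m \le L \le L_M$, $N_m \le N \le N_M$, $\mu_m \le \mu \le \mu_M$. Define $E(z) = \exp\big(2\int_0^z (\mu(\sigma) - \sigma N(\sigma))/L(\sigma)\,d\sigma\big)$ and $\Phi(\xi) = \int_0^{\xi} E(z)/L(z)\,dz$. Then for all $\xi \in [0,\lambda]$: $\frac{\sqrt{\pi}}{2}\frac{\sqrt{L_m}}{L_M\sqrt{N_M}}\,\mathrm{erf}\big(\sqrt{N_M/L_m}\,\xi\big) \le \Phi(\xi) \le \frac{1}{2\mu_M}\exp\big(2\mu_M \xi/L_m\big)$. -/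
noncomputable def erf (x : ℝ) : ℝ :=
  (2 / Real.sqrt Real.pi) * ∫ t in (0:ℝ)..x, Real.exp (-t ^ 2)

lemma integral_exp_mul_aux (c : ℝ) (hc : c ≠ 0) (b : ℝ) :
    ∫ x in (0:ℝ)..b, Real.exp (c * x) = (Real.exp (c * b) - 1) / c := by
  have h : ∀ x ∈ Set.uIcc (0:ℝ) b,
      HasDerivAt (fun y => Real.exp (c * y) / c) (Real.exp (c * x)) x := by
    intro x _
    have h1 : HasDerivAt (fun y : ℝ => c * y) c x := by
      simpa using (hasDerivAt_id x).const_mul c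
    have h2 := ((Real.hasDerivAt_exp (c * x)).comp x h1).div_const c
    rw [mul_div_cancel_right₀ _ hc] at h2
    exact h2
  have hint : IntervalIntegrable (fun x => Real.exp (c * x)) MeasureTheory.volume 0 b :=
    (Real.continuous_exp.comp (continuous_const.mul continuous_id)).intervalIntegrable _ _
  have heq := intervalIntegral.integral_eq_sub_of_hasDerivAt h hint
  rw [heq]
  rw [mul_zero, Real.exp_zero]
  ring

theorem stmt_3 (lam Lm LM Nm NM mum muM : ℝ) (hlam : 0 < lam)
    (L N mu : ℝ → ℝ)
    (hLc : ContinuousOn L (Set.Icc 0 lam)) (hNc : ContinuousOn N (Set.Icc 0 lam))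
    (hmuc : ContinuousOn mu (Set.Icc 0 lam))
    (hLm : 0 < Lm) (hNm : 0 < Nm) (hmum : 0 < mum)
    (hL : ∀ z ∈ Set.Icc (0:ℝ) lam, Lm ≤ L z ∧ L z ≤ LM)
    (hN : ∀ z ∈ Set.Icc (0:ℝ) lam, Nm ≤ N z ∧ N z ≤ NM)
    (hmu : ∀ z ∈ Set.Icc (0:ℝ) lam, mum ≤ mu z ∧ mu z ≤ muM)
    (E Phi : ℝ → ℝ)
    (hE : ∀ z ∈ Set.Icc (0:ℝ) lam,
      E z = Real.exp (2 * ∫ σ in (0:ℝ)..z, (mu σ - σ * N σ) / L σ))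
    (hPhi : ∀ ξ ∈ Set.Icc (0:ℝ) lam, Phi ξ = ∫ z in (0:ℝ)..ξ, E z / L z) :
    ∀ ξ ∈ Set.Icc (0:ℝ) lam,
      Real.sqrt Real.pi / 2 * (Real.sqrt Lm / (LM * Real.sqrt NM)) *
        erf (Real.sqrt (NM / Lm) * ξ) ≤ Phi ξ ∧
      Phi ξ ≤ 1 / (2 * muM) * Real.exp (2 * muM * ξ / Lm) := by
  have h0mem : (0:ℝ) ∈ Set.Icc (0:ℝ) lam := ⟨le_refl 0, hlam.le⟩
  have hLM : Lm ≤ LM := le_trans (hL 0 h0mem).1 (hL 0 h0mem).2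
  have hNM : Nm ≤ NM := le_trans (hN 0 h0mem).1 (hN 0 h0mem).2
  have hmuM : mum ≤ muM := le_trans (hmu 0 h0mem).1 (hmu 0 h0mem).2
  have hLMpos : 0 < LM := hLm.trans_le hLM
  have hNMpos : 0 < NM := hNm.trans_le hNM
  have hmuMpos : 0 < muM := hmum.trans_le hmuM
  set f : ℝ → ℝ := fun σ => (mu σ - σ * N σ) / L σ with hfdef
  have hLne : ∀ z ∈ Set.Icc (0:ℝ) lam, L z ≠ 0 := fun z hz => (hLm.trans_le (hL z hz).1).ne'
  have hfc : ContinuousOn f (Set.Icc 0 lam) :=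
    (hmuc.sub (continuousOn_id.mul hNc)).div hLc hLne
  have huIcc : Set.uIcc (0:ℝ) lam = Set.Icc (0:ℝ) lam := Set.uIcc_of_le hlam.le
  have hFc : ContinuousOn (fun z => ∫ σ in (0:ℝ)..z, f σ) (Set.Icc 0 lam) := by
    rw [← huIcc]
    refine intervalIntegral.continuousOn_primitive_interval ?_
    rw [huIcc]
    exact hfc.integrableOn_compact isCompact_Icc
  have hEc : ContinuousOn E (Set.Icc 0 lam) := by
    have h1 : ContinuousOn (fun z => Real.exp (2 * ∫ σ in (0:ℝ)..z, f σ))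
        (Set.Icc 0 lam) :=
      Real.continuous_exp.comp_continuousOn (continuousOn_const.mul hFc)
    exact h1.congr (fun z hz => hE z hz)
  -- pointwise bounds on f
  have hfub : ∀ σ ∈ Set.Icc (0:ℝ) lam, f σ ≤ muM / Lm := by
    intro σ hσ
    have hLσ := hL σ hσ; have hNσ := hN σ hσ; have hmuσ := hmu σ hσ
    have hN0 : 0 ≤ σ * N σ := mul_nonneg hσ.1 ((hNm.trans_le hNσ.1).le)
    have h1 : mu σ - σ * N σ ≤ muM := by linarith [hmuσ.2]
    exact div_le_div₀ hmuMpos.le h1 hLm hLσ.1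
  have hflb : ∀ σ ∈ Set.Icc (0:ℝ) lam, -(NM / Lm) * σ ≤ f σ := by
    intro σ hσ
    have hLσ := hL σ hσ; have hNσ := hN σ hσ; have hmuσ := hmu σ hσ
    have hLσ0 : 0 < L σ := hLm.trans_le hLσ.1
    have hnum : -(σ * NM) ≤ mu σ - σ * N σ := by
      have h2 : σ * N σ ≤ σ * NM := mul_le_mul_of_nonneg_left hNσ.2 hσ.1
      have h3 : 0 ≤ mu σ := (hmum.trans_le hmuσ.1).le
      linarith
    rcases le_or_gt 0 (mu σ - σ * N σ) with h | h
    · have h4 : -(NM / Lm) * σ ≤ 0 := by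
        have : 0 ≤ NM / Lm * σ := mul_nonneg (div_nonneg hNMpos.le hLm.le) hσ.1
        linarith
      exact h4.trans (div_nonneg h hLσ0.le)
    · have h5 : (mu σ - σ * N σ) / Lm ≤ f σ := by
        show (mu σ - σ * N σ) / Lm ≤ (mu σ - σ * N σ) / L σ
        rw [div_eq_mul_inv, div_eq_mul_inv]
        exact mul_le_mul_of_nonpos_left (inv_anti₀ hLm hLσ.1) h.le
      have h6 : -(σ * NM) / Lm ≤ (mu σ - σ * N σ) / Lm := by
        exact (div_le_div_iff_of_pos_right hLm).mpr hnum
      have h7 : -(NM / Lm) * σ = -(σ * NM) / Lm := by ring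
      linarith
  -- integrability of f on subintervals
  have hfiz : ∀ z ∈ Set.Icc (0:ℝ) lam, IntervalIntegrable f MeasureTheory.volume 0 z :=
    fun z hz => (hfc.mono (Set.Icc_subset_Icc le_rfl hz.2)).intervalIntegrable_of_Icc hz.1
  -- bounds on the primitive
  have hFub : ∀ z ∈ Set.Icc (0:ℝ) lam, (∫ σ in (0:ℝ)..z, f σ) ≤ muM / Lm * z := by
    intro z hz
    calc (∫ σ in (0:ℝ)..z, f σ) ≤ ∫ _σ in (0:ℝ)..z, muM / Lm :=
          intervalIntegral.integral_mono_on hz.1 (hfiz z hz) intervalIntegrable_const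
            (fun x hx => hfub x ⟨hx.1, hx.2.trans hz.2⟩)
      _ = muM / Lm * z := by simp; ring
  have hFlb : ∀ z ∈ Set.Icc (0:ℝ) lam, -(NM / Lm) * (z ^ 2 / 2) ≤ ∫ σ in (0:ℝ)..z, f σ := by
    intro z hz
    have h1 : (∫ σ in (0:ℝ)..z, -(NM / Lm) * σ) = -(NM / Lm) * (z ^ 2 / 2) := by
      rw [intervalIntegral.integral_const_mul, integral_id]
      ring
    rw [← h1]
    exact intervalIntegral.integral_mono_on hz.1
      ((continuous_const.mul continuous_id).intervalIntegrable _ _) (hfiz z hz)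
      (fun x hx => hflb x ⟨hx.1, hx.2.trans hz.2⟩)
  -- bounds on E
  have hEpos : ∀ z ∈ Set.Icc (0:ℝ) lam, 0 < E z := by
    intro z hz; rw [hE z hz]; exact Real.exp_pos _
  have hEub : ∀ z ∈ Set.Icc (0:ℝ) lam, E z ≤ Real.exp (2 * muM / Lm * z) := by
    intro z hz
    rw [hE z hz]
    apply Real.exp_le_exp.mpr
    calc 2 * ∫ σ in (0:ℝ)..z, f σ ≤ 2 * (muM / Lm * z) :=
          mul_le_mul_of_nonneg_left (hFub z hz) (by norm_num)
      _ = 2 * muM / Lm * z := by ring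
  have hElb : ∀ z ∈ Set.Icc (0:ℝ) lam, Real.exp (-(NM / Lm) * z ^ 2) ≤ E z := by
    intro z hz
    rw [hE z hz]
    apply Real.exp_le_exp.mpr
    calc -(NM / Lm) * z ^ 2 = 2 * (-(NM / Lm) * (z ^ 2 / 2)) := by ring
      _ ≤ 2 * ∫ σ in (0:ℝ)..z, f σ := mul_le_mul_of_nonneg_left (hFlb z hz) (by norm_num)
  intro ξ hξ
  have hsub : Set.Icc (0:ℝ) ξ ⊆ Set.Icc (0:ℝ) lam := Set.Icc_subset_Icc le_rfl hξ.2
  have hELint : IntervalIntegrable (fun z => E z / L z) MeasureTheory.volume 0 ξ :=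
    ((hEc.div hLc hLne).mono hsub).intervalIntegrable_of_Icc hξ.1
  rw [hPhi ξ hξ]
  constructor
  · -- lower bound
    set k : ℝ := Real.sqrt (NM / Lm) with hk
    have hkpos : 0 < k := Real.sqrt_pos.mpr (div_pos hNMpos hLm)
    have hk2 : k ^ 2 = NM / Lm := Real.sq_sqrt (div_pos hNMpos hLm).le
    have hkdiv : k = Real.sqrt NM / Real.sqrt Lm := Real.sqrt_div hNMpos.le Lm
    have step1 : (∫ z in (0:ℝ)..ξ, Real.exp (-(NM / Lm) * z ^ 2) / LM)
        ≤ ∫ z in (0:ℝ)..ξ, E z / L z := by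
      refine intervalIntegral.integral_mono_on hξ.1 ?_ hELint ?_
      · exact ((Real.continuous_exp.comp ((continuous_const).mul (continuous_pow 2))).div_const LM).intervalIntegrable _ _
      · intro x hx
        have hx' := hsub hx
        have hLx := hL x hx'
        exact div_le_div₀ (hEpos x hx').le (hElb x hx') (hLm.trans_le hLx.1) hLx.2
    have step2 : (∫ z in (0:ℝ)..ξ, Real.exp (-(NM / Lm) * z ^ 2) / LM)
        = (1 / LM) * (k⁻¹ * ∫ t in (0:ℝ)..(k * ξ), Real.exp (-t ^ 2)) := by
      have hcongr : ∀ z : ℝ, Real.exp (-(NM / Lm) * z ^ 2) = Real.exp (-(k * z) ^ 2) := by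
        intro z
        congr 1
        rw [mul_pow, hk2]
        ring
      rw [intervalIntegral.integral_div]
      simp_rw [hcongr]
      rw [intervalIntegral.integral_comp_mul_left (fun t => Real.exp (-t ^ 2)) hkpos.ne']
      rw [mul_zero]
      simp [smul_eq_mul]
      ring
    refine le_trans (le_of_eq ?_) (le_trans (le_of_eq step2.symm) step1)
    -- show goal LHS equals the substituted form
    show Real.sqrt Real.pi / 2 * (Real.sqrt Lm / (LM * Real.sqrt NM)) * erf (k * ξ)
        = (1 / LM) * (k⁻¹ * ∫ t in (0:ℝ)..(k * ξ), Real.exp (-t ^ 2))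
    have hπ : Real.sqrt Real.pi ≠ 0 := (Real.sqrt_pos.mpr Real.pi_pos).ne'
    have hkinv : k⁻¹ = Real.sqrt Lm / Real.sqrt NM := by rw [hkdiv, inv_div]
    rw [erf, hkinv]
    field_simp
  · -- upper bound
    set c : ℝ := 2 * muM / Lm with hc
    have hcpos : 0 < c := by positivity
    have step1 : (∫ z in (0:ℝ)..ξ, E z / L z)
        ≤ ∫ z in (0:ℝ)..ξ, Real.exp (c * z) / Lm := by
      refine intervalIntegral.integral_mono_on hξ.1 hELint ?_ ?_
      · exact ((Real.continuous_exp.comp ((continuous_const).mul continuous_id)).div_const Lm).intervalIntegrable _ _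
      · intro x hx
        have hx' := hsub hx
        have hLx := hL x hx'
        exact div_le_div₀ (Real.exp_pos _).le (hEub x hx') hLm hLx.1
    have step2 : (∫ z in (0:ℝ)..ξ, Real.exp (c * z) / Lm)
        = (Real.exp (c * ξ) - 1) / c / Lm := by
      rw [intervalIntegral.integral_div, integral_exp_mul_aux c hcpos.ne']
    have hce : c * ξ = 2 * muM * ξ / Lm := by rw [hc]; ring
    refine step1.trans ?_
    rw [step2, hce]
    have hexp : (0:ℝ) < Real.exp (2 * muM * ξ / Lm) := Real.exp_pos _
    rw [div_div]
    have h1 : c * Lm = 2 * muM := by rw [hc]; field_simp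
    rw [h1]
    rw [div_le_iff₀ (by positivity : (0:ℝ) < 2 * muM)] at *
    have : 1 / (2 * muM) * Real.exp (2 * muM * ξ / Lm) * (2 * muM)
        = Real.exp (2 * muM * ξ / Lm) := by field_simp
    rw [this]
    linarith
end

section
/- Let $\lambda>0$, $L_m, L_M, \widetilde{L}, \mu_M, \widetilde{\mu} > 0$. Let $L_1, L_2, \mu_1, \mu_2 : [0,\lambda]\to\mathbb{R}$ be continuous with $L_m \le L_i \le L_M$ and $0 < \mu_i \le \mu_M$, and suppose $\|L_1 - L_2\|_\infty \le \widetilde{L}\,\delta$ and $\|\mu_1 - \mu_2\|_\infty \le \widetilde{\mu}\,\delta$ for some $\delta \ge 0$. Define $U_i(z) = \exp\big(2\int_0^z \mu_i(\sigma)/L_i(\sigma)d\sigma\big)$. Then for all $z\in[0,\lambda]$, $|U_1(z) - U_2(z)| \le \frac{2\exp(2\mu_M z/L_m)}{L_m^2}\, z\,(\mu_M \widetilde{L} + L_m \widetilde{\mu})\,\delta$. -/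
lemma exp_lip_aux {s t M : ℝ} (hs : s ≤ M) (ht : t ≤ M) :
    |Real.exp s - Real.exp t| ≤ Real.exp M * |s - t| := by
  wlog h : s ≤ t generalizing s t
  · rw [abs_sub_comm, abs_sub_comm s t]; exact this ht hs (le_of_not_ge h)
  have h1 : Real.exp s ≤ Real.exp t := Real.exp_le_exp.2 h
  have h2 : Real.exp t * (1 + (s - t)) ≤ Real.exp s := by
    have := Real.add_one_le_exp (s - t)
    calc Real.exp t * (1 + (s - t)) ≤ Real.exp t * Real.exp (s - t) := by
          apply mul_le_mul_of_nonneg_left (by linarith) (Real.exp_pos t).le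
      _ = Real.exp s := by rw [← Real.exp_add]; ring_nf
  have hM : Real.exp t ≤ Real.exp M := Real.exp_le_exp.2 ht
  rw [abs_of_nonpos (by linarith), abs_of_nonpos (by linarith)]
  nlinarith [Real.exp_pos t]

theorem stmt_4 (lam Lm LM Lt muM muT δ : ℝ) (hlam : 0 < lam)
    (hLm : 0 < Lm) (hLM : 0 < LM) (hLt : 0 < Lt) (hmuM : 0 < muM) (hmut : 0 < muT)
    (hδ : 0 ≤ δ)
    (L₁ L₂ mu₁ mu₂ : ℝ → ℝ)
    (hL₁c : ContinuousOn L₁ (Set.Icc 0 lam)) (hL₂c : ContinuousOn L₂ (Set.Icc 0 lam))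
    (hmu₁c : ContinuousOn mu₁ (Set.Icc 0 lam)) (hmu₂c : ContinuousOn mu₂ (Set.Icc 0 lam))
    (hL₁ : ∀ z ∈ Set.Icc (0:ℝ) lam, Lm ≤ L₁ z ∧ L₁ z ≤ LM)
    (hL₂ : ∀ z ∈ Set.Icc (0:ℝ) lam, Lm ≤ L₂ z ∧ L₂ z ≤ LM)
    (hmu₁ : ∀ z ∈ Set.Icc (0:ℝ) lam, 0 < mu₁ z ∧ mu₁ z ≤ muM)
    (hmu₂ : ∀ z ∈ Set.Icc (0:ℝ) lam, 0 < mu₂ z ∧ mu₂ z ≤ muM)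
    (hLdiff : ∀ z ∈ Set.Icc (0:ℝ) lam, |L₁ z - L₂ z| ≤ Lt * δ)
    (hmudiff : ∀ z ∈ Set.Icc (0:ℝ) lam, |mu₁ z - mu₂ z| ≤ muT * δ)
    (U₁ U₂ : ℝ → ℝ)
    (hU₁ : ∀ z ∈ Set.Icc (0:ℝ) lam, U₁ z = Real.exp (2 * ∫ σ in (0:ℝ)..z, mu₁ σ / L₁ σ))
    (hU₂ : ∀ z ∈ Set.Icc (0:ℝ) lam, U₂ z = Real.exp (2 * ∫ σ in (0:ℝ)..z, mu₂ σ / L₂ σ)) :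
    ∀ z ∈ Set.Icc (0:ℝ) lam,
      |U₁ z - U₂ z| ≤
        2 * Real.exp (2 * muM * z / Lm) / Lm ^ 2 * z * (muM * Lt + Lm * muT) * δ := by
  intro z hz
  obtain ⟨hz0, hzlam⟩ := hz
  have hzmem : z ∈ Set.Icc (0:ℝ) lam := ⟨hz0, hzlam⟩
  set a := ∫ σ in (0:ℝ)..z, mu₁ σ / L₁ σ with ha_def
  set b := ∫ σ in (0:ℝ)..z, mu₂ σ / L₂ σ with hb_def
  set C := (muM * Lt + Lm * muT) * δ / Lm ^ 2 with hC_def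
  have hsub : Set.Icc (0:ℝ) z ⊆ Set.Icc 0 lam := Set.Icc_subset_Icc le_rfl hzlam
  have huIoc : Set.uIoc (0:ℝ) z ⊆ Set.Icc 0 lam := by
    rw [Set.uIoc_of_le hz0]
    exact fun x hx => hsub ⟨hx.1.le, hx.2⟩
  -- integrability
  have hint1 : IntervalIntegrable (fun σ => mu₁ σ / L₁ σ) MeasureTheory.volume 0 z := by
    apply ContinuousOn.intervalIntegrable
    rw [Set.uIcc_of_le hz0]
    exact (hmu₁c.mono hsub).div (hL₁c.mono hsub)
      (fun x hx => ne_of_gt (lt_of_lt_of_le hLm (hL₁ x (hsub hx)).1))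
  have hint2 : IntervalIntegrable (fun σ => mu₂ σ / L₂ σ) MeasureTheory.volume 0 z := by
    apply ContinuousOn.intervalIntegrable
    rw [Set.uIcc_of_le hz0]
    exact (hmu₂c.mono hsub).div (hL₂c.mono hsub)
      (fun x hx => ne_of_gt (lt_of_lt_of_le hLm (hL₂ x (hsub hx)).1))
  -- bound on a
  have ha : a ≤ muM / Lm * z := by
    have h1 : ‖a‖ ≤ muM / Lm * |z - 0| := by
      apply intervalIntegral.norm_integral_le_of_norm_le_const
      intro x hx
      have hxm := huIoc hx
      have hL := (hL₁ x hxm).1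
      have hmu := hmu₁ x hxm
      rw [Real.norm_eq_abs, abs_of_nonneg (div_nonneg hmu.1.le (lt_of_lt_of_le hLm hL).le)]
      exact div_le_div₀ (by positivity) hmu.2 hLm hL
    calc a ≤ ‖a‖ := le_abs_self a
      _ ≤ muM / Lm * |z - 0| := h1
      _ = muM / Lm * z := by rw [sub_zero, abs_of_nonneg hz0]
  have hb : b ≤ muM / Lm * z := by
    have h1 : ‖b‖ ≤ muM / Lm * |z - 0| := by
      apply intervalIntegral.norm_integral_le_of_norm_le_const
      intro x hx
      have hxm := huIoc hx
      have hL := (hL₂ x hxm).1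
      have hmu := hmu₂ x hxm
      rw [Real.norm_eq_abs, abs_of_nonneg (div_nonneg hmu.1.le (lt_of_lt_of_le hLm hL).le)]
      exact div_le_div₀ (by positivity) hmu.2 hLm hL
    calc b ≤ ‖b‖ := le_abs_self b
      _ ≤ muM / Lm * |z - 0| := h1
      _ = muM / Lm * z := by rw [sub_zero, abs_of_nonneg hz0]
  -- bound on |a - b|
  have hab : |a - b| ≤ C * z := by
    have heq : a - b = ∫ σ in (0:ℝ)..z, (mu₁ σ / L₁ σ - mu₂ σ / L₂ σ) :=
      (intervalIntegral.integral_sub hint1 hint2).symm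
    rw [heq]
    have h1 : ‖∫ σ in (0:ℝ)..z, (mu₁ σ / L₁ σ - mu₂ σ / L₂ σ)‖ ≤ C * |z - 0| := by
      apply intervalIntegral.norm_integral_le_of_norm_le_const
      intro x hx
      have hxm := huIoc hx
      have hL1 := (hL₁ x hxm).1
      have hL2 := (hL₂ x hxm).1
      have hL1p : (0:ℝ) < L₁ x := lt_of_lt_of_le hLm hL1
      have hL2p : (0:ℝ) < L₂ x := lt_of_lt_of_le hLm hL2
      have hmu1 := hmu₁ x hxm
      have hmu2 := hmu₂ x hxm
      have hLd := hLdiff x hxm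
      have hmud := hmudiff x hxm
      rw [Real.norm_eq_abs]
      have split : mu₁ x / L₁ x - mu₂ x / L₂ x =
          (mu₁ x - mu₂ x) / L₁ x + mu₂ x * (L₂ x - L₁ x) / (L₁ x * L₂ x) := by
        field_simp
        ring
      rw [split]
      have e1 : |(mu₁ x - mu₂ x) / L₁ x| ≤ muT * δ / Lm := by
        rw [abs_div, abs_of_pos hL1p]
        exact div_le_div₀ (by positivity) hmud hLm hL1
      have e2 : |mu₂ x * (L₂ x - L₁ x) / (L₁ x * L₂ x)| ≤ muM * (Lt * δ) / Lm ^ 2 := by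
        rw [abs_div, abs_mul, abs_of_pos (mul_pos hL1p hL2p), abs_of_pos hmu2.1]
        apply div_le_div₀ (by positivity) _ (by positivity) _
        · apply mul_le_mul hmu2.2 _ (abs_nonneg _) hmuM.le
          rw [abs_sub_comm]; exact hLd
        · nlinarith
      have key : muT * δ / Lm + muM * (Lt * δ) / Lm ^ 2 = C := by
        rw [hC_def]; field_simp; ring
      calc |(mu₁ x - mu₂ x) / L₁ x + mu₂ x * (L₂ x - L₁ x) / (L₁ x * L₂ x)|
          ≤ |(mu₁ x - mu₂ x) / L₁ x| + |mu₂ x * (L₂ x - L₁ x) / (L₁ x * L₂ x)| := abs_add_le _ _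
        _ ≤ muT * δ / Lm + muM * (Lt * δ) / Lm ^ 2 := add_le_add e1 e2
        _ = C := key
    calc |∫ σ in (0:ℝ)..z, (mu₁ σ / L₁ σ - mu₂ σ / L₂ σ)| ≤ C * |z - 0| := h1
      _ = C * z := by rw [sub_zero, abs_of_nonneg hz0]
  -- final
  rw [hU₁ z hzmem, hU₂ z hzmem]
  have hM1 : 2 * a ≤ 2 * muM * z / Lm := by
    have : 2 * a ≤ 2 * (muM / Lm * z) := by linarith
    calc 2 * a ≤ 2 * (muM / Lm * z) := this
      _ = 2 * muM * z / Lm := by ring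
  have hM2 : 2 * b ≤ 2 * muM * z / Lm := by
    have : 2 * b ≤ 2 * (muM / Lm * z) := by linarith
    calc 2 * b ≤ 2 * (muM / Lm * z) := this
      _ = 2 * muM * z / Lm := by ring
  have hexp := exp_lip_aux hM1 hM2
  have habs : |2 * a - 2 * b| ≤ 2 * (C * z) := by
    have : |2 * a - 2 * b| = 2 * |a - b| := by
      rw [show 2 * a - 2 * b = 2 * (a - b) by ring, abs_mul, abs_two]
    rw [this]; linarith
  have hexp_pos := Real.exp_pos (2 * muM * z / Lm)
  calc |Real.exp (2 * a) - Real.exp (2 * b)|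
      ≤ Real.exp (2 * muM * z / Lm) * |2 * a - 2 * b| := hexp
    _ ≤ Real.exp (2 * muM * z / Lm) * (2 * (C * z)) := by
        apply mul_le_mul_of_nonneg_left habs hexp_pos.le
    _ = 2 * Real.exp (2 * muM * z / Lm) / Lm ^ 2 * z * (muM * Lt + Lm * muT) * δ := by
        rw [hC_def]; field_simp
end

section
/- Let $\lambda>0$, $L_m, L_M, \widetilde{L}, N_M, \widetilde{N} > 0$. Let $L_1, L_2, N_1, N_2 : [0,\lambda]\to\mathbb{R}$ be continuous with $L_m \le L_i \le L_M$, $0 < N_i \le N_M$, $\|L_1-L_2\|_\infty \le \widetilde{L}\,\delta$ and $\|N_1-N_2\|_\infty \le \widetilde{N}\,\delta$. Define $I_i(z) = \exp\big(2\int_0^z \sigma N_i(\sigma)/L_i(\sigma)d\sigma\big)$. Then for all $z\in[0,\lambda]$, $|I_1(z)-I_2(z)| \le \frac{\exp(N_M z^2/L_m)}{L_m^2}\, z^2\,(N_M\widetilde{L} + L_m\widetilde{N})\,\delta$. -/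
lemma abs_exp_sub_exp_le' {a b c : ℝ} (ha : a ≤ c) (hb : b ≤ c) :
    |Real.exp a - Real.exp b| ≤ Real.exp c * |a - b| := by
  wlog h : b ≤ a generalizing a b
  · rw [abs_sub_comm, abs_sub_comm a b]; exact this hb ha (le_of_not_ge h)
  rw [abs_of_nonneg (sub_nonneg.2 (Real.exp_le_exp.2 h)), abs_of_nonneg (sub_nonneg.2 h)]
  have h1 : Real.exp (a - b) * Real.exp (-(a - b)) = 1 := by
    rw [← Real.exp_add]; simp
  have h2 : -(a - b) + 1 ≤ Real.exp (-(a - b)) := Real.add_one_le_exp _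
  have h3 : Real.exp (a - b) - 1 ≤ (a - b) * Real.exp (a - b) := by
    nlinarith [Real.exp_pos (a - b)]
  have h4 : Real.exp a = Real.exp b * Real.exp (a - b) := by
    rw [← Real.exp_add]; ring_nf
  have h5 : Real.exp a ≤ Real.exp c := Real.exp_le_exp.2 ha
  nlinarith [Real.exp_pos b, sub_nonneg.2 h]

theorem stmt_5 (lam Lm LM Lt NM Nt δ : ℝ) (hlam : 0 < lam)
    (hLm : 0 < Lm) (hLM : 0 < LM) (hLt : 0 < Lt) (hNM : 0 < NM) (hNt : 0 < Nt)
    (hδ : 0 ≤ δ)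
    (L₁ L₂ N₁ N₂ : ℝ → ℝ)
    (hL₁c : ContinuousOn L₁ (Set.Icc 0 lam)) (hL₂c : ContinuousOn L₂ (Set.Icc 0 lam))
    (hN₁c : ContinuousOn N₁ (Set.Icc 0 lam)) (hN₂c : ContinuousOn N₂ (Set.Icc 0 lam))
    (hL₁ : ∀ z ∈ Set.Icc (0:ℝ) lam, Lm ≤ L₁ z ∧ L₁ z ≤ LM)
    (hL₂ : ∀ z ∈ Set.Icc (0:ℝ) lam, Lm ≤ L₂ z ∧ L₂ z ≤ LM)
    (hN₁ : ∀ z ∈ Set.Icc (0:ℝ) lam, 0 < N₁ z ∧ N₁ z ≤ NM)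
    (hN₂ : ∀ z ∈ Set.Icc (0:ℝ) lam, 0 < N₂ z ∧ N₂ z ≤ NM)
    (hLdiff : ∀ z ∈ Set.Icc (0:ℝ) lam, |L₁ z - L₂ z| ≤ Lt * δ)
    (hNdiff : ∀ z ∈ Set.Icc (0:ℝ) lam, |N₁ z - N₂ z| ≤ Nt * δ)
    (I₁ I₂ : ℝ → ℝ)
    (hI₁ : ∀ z ∈ Set.Icc (0:ℝ) lam, I₁ z = Real.exp (2 * ∫ σ in (0:ℝ)..z, σ * N₁ σ / L₁ σ))
    (hI₂ : ∀ z ∈ Set.Icc (0:ℝ) lam, I₂ z = Real.exp (2 * ∫ σ in (0:ℝ)..z, σ * N₂ σ / L₂ σ)) :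
    ∀ z ∈ Set.Icc (0:ℝ) lam,
      |I₁ z - I₂ z| ≤
        Real.exp (NM * z ^ 2 / Lm) / Lm ^ 2 * z ^ 2 * (NM * Lt + Lm * Nt) * δ := by
  intro z hz
  obtain ⟨hz0, hzlam⟩ := hz
  have hsub : Set.Icc (0:ℝ) z ⊆ Set.Icc 0 lam := Set.Icc_subset_Icc le_rfl hzlam
  set C : ℝ := (NM * Lt + Lm * Nt) * δ / Lm ^ 2 with hC
  -- continuity / integrability
  have hL₁ne : ∀ σ ∈ Set.Icc (0:ℝ) z, L₁ σ ≠ 0 :=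
    fun σ hσ => ne_of_gt (lt_of_lt_of_le hLm (hL₁ σ (hsub hσ)).1)
  have hL₂ne : ∀ σ ∈ Set.Icc (0:ℝ) z, L₂ σ ≠ 0 :=
    fun σ hσ => ne_of_gt (lt_of_lt_of_le hLm (hL₂ σ (hsub hσ)).1)
  have hc₁ : ContinuousOn (fun σ => σ * N₁ σ / L₁ σ) (Set.Icc 0 z) :=
    (continuousOn_id.mul (hN₁c.mono hsub)).div (hL₁c.mono hsub) hL₁ne
  have hc₂ : ContinuousOn (fun σ => σ * N₂ σ / L₂ σ) (Set.Icc 0 z) :=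
    (continuousOn_id.mul (hN₂c.mono hsub)).div (hL₂c.mono hsub) hL₂ne
  have hi₁ : IntervalIntegrable (fun σ => σ * N₁ σ / L₁ σ) MeasureTheory.volume 0 z :=
    hc₁.intervalIntegrable_of_Icc hz0
  have hi₂ : IntervalIntegrable (fun σ => σ * N₂ σ / L₂ σ) MeasureTheory.volume 0 z :=
    hc₂.intervalIntegrable_of_Icc hz0
  have hiC : IntervalIntegrable (fun σ : ℝ => σ * C) MeasureTheory.volume 0 z :=
    (continuous_id.mul continuous_const).intervalIntegrable 0 z
  have hiM : IntervalIntegrable (fun σ : ℝ => σ * (NM / Lm)) MeasureTheory.volume 0 z :=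
    (continuous_id.mul continuous_const).intervalIntegrable 0 z
  -- pointwise bounds
  have hptM : ∀ i ∈ Set.Icc (0:ℝ) z, ∀ (N L : ℝ → ℝ),
      (∀ s ∈ Set.Icc (0:ℝ) lam, Lm ≤ L s ∧ L s ≤ LM) →
      (∀ s ∈ Set.Icc (0:ℝ) lam, 0 < N s ∧ N s ≤ NM) →
      i * N i / L i ≤ i * (NM / Lm) := by
    intro i hi N L hL hN
    have h1 := hL i (hsub hi); have h2 := hN i (hsub hi)
    rw [mul_div_assoc]
    exact mul_le_mul_of_nonneg_left (div_le_div₀ hNM.le h2.2 hLm h1.1) hi.1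
  have hnn : ∀ i ∈ Set.Icc (0:ℝ) z, ∀ (N L : ℝ → ℝ),
      (∀ s ∈ Set.Icc (0:ℝ) lam, Lm ≤ L s ∧ L s ≤ LM) →
      (∀ s ∈ Set.Icc (0:ℝ) lam, 0 < N s ∧ N s ≤ NM) →
      0 ≤ i * N i / L i := by
    intro i hi N L hL hN
    have h1 := hL i (hsub hi); have h2 := hN i (hsub hi)
    exact div_nonneg (mul_nonneg hi.1 h2.1.le) (hLm.trans_le h1.1).le
  -- integral bounds for each
  have hIint : ∀ (N L : ℝ → ℝ), IntervalIntegrable (fun σ => σ * N σ / L σ) MeasureTheory.volume 0 z →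
      (∀ s ∈ Set.Icc (0:ℝ) lam, Lm ≤ L s ∧ L s ≤ LM) →
      (∀ s ∈ Set.Icc (0:ℝ) lam, 0 < N s ∧ N s ≤ NM) →
      0 ≤ (∫ σ in (0:ℝ)..z, σ * N σ / L σ) ∧
      (∫ σ in (0:ℝ)..z, σ * N σ / L σ) ≤ z ^ 2 / 2 * (NM / Lm) := by
    intro N L hi hL hN
    constructor
    · exact intervalIntegral.integral_nonneg hz0 (fun i hi' => hnn i hi' N L hL hN)
    · have := intervalIntegral.integral_mono_on hz0 hi hiM (fun i hi' => hptM i hi' N L hL hN)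
      calc (∫ σ in (0:ℝ)..z, σ * N σ / L σ) ≤ ∫ σ in (0:ℝ)..z, σ * (NM / Lm) := this
        _ = z ^ 2 / 2 * (NM / Lm) := by
            rw [intervalIntegral.integral_mul_const, integral_id]; ring
  have hb₁ := hIint N₁ L₁ hi₁ hL₁ hN₁
  have hb₂ := hIint N₂ L₂ hi₂ hL₂ hN₂
  -- pointwise difference bound
  have hdiff : ∀ i ∈ Set.Icc (0:ℝ) z,
      |i * N₁ i / L₁ i - i * N₂ i / L₂ i| ≤ i * C := by
    intro i hi
    have h1 := hL₁ i (hsub hi); have h2 := hL₂ i (hsub hi)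
    have h3 := hN₁ i (hsub hi); have h4 := hN₂ i (hsub hi)
    have h5 := hLdiff i (hsub hi); have h6 := hNdiff i (hsub hi)
    have hL₁p : 0 < L₁ i := hLm.trans_le h1.1
    have hL₂p : 0 < L₂ i := hLm.trans_le h2.1
    have key : |N₁ i / L₁ i - N₂ i / L₂ i| ≤ C := by
      rw [div_sub_div _ _ hL₁p.ne' hL₂p.ne', abs_div,
        abs_of_pos (mul_pos hL₁p hL₂p), hC, div_le_div_iff₀ (mul_pos hL₁p hL₂p) (by positivity)]
      have hnum : |N₁ i * L₂ i - N₂ i * L₁ i| ≤ L₂ i * (Nt * δ) + N₂ i * (Lt * δ) := by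
        have e : N₁ i * L₂ i - N₂ i * L₁ i
            = L₂ i * (N₁ i - N₂ i) + N₂ i * (L₂ i - L₁ i) := by ring
        rw [e]
        refine (abs_add_le _ _).trans (add_le_add ?_ ?_)
        · rw [abs_mul, abs_of_pos hL₂p]
          exact mul_le_mul_of_nonneg_left h6 hL₂p.le
        · rw [abs_mul, abs_of_pos h4.1, abs_sub_comm]
          exact mul_le_mul_of_nonneg_left h5 h4.1.le
      have e2 : |N₁ i * L₂ i - L₁ i * N₂ i| = |N₁ i * L₂ i - N₂ i * L₁ i| := by
        ring_nf
      rw [e2]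
      have hLL : Lm * Lm ≤ L₁ i * L₂ i := mul_le_mul h1.1 h2.1 hLm.le hL₁p.le
      have t1 : N₂ i * (Lm * Lm) ≤ NM * (L₁ i * L₂ i) :=
        mul_le_mul h4.2 hLL (by positivity) hNM.le
      have t2 : Lm * (Lm * L₂ i) ≤ L₁ i * (Lm * L₂ i) :=
        mul_le_mul_of_nonneg_right h1.1 (by positivity)
      nlinarith [hnum, mul_nonneg hLt.le hδ, mul_nonneg hNt.le hδ]
    have e : i * N₁ i / L₁ i - i * N₂ i / L₂ i = i * (N₁ i / L₁ i - N₂ i / L₂ i) := by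
      field_simp
    rw [e, abs_mul, abs_of_nonneg hi.1]
    exact mul_le_mul_of_nonneg_left key hi.1
  -- integral difference bound
  have habs : |(∫ σ in (0:ℝ)..z, σ * N₁ σ / L₁ σ) - ∫ σ in (0:ℝ)..z, σ * N₂ σ / L₂ σ|
      ≤ z ^ 2 / 2 * C := by
    rw [← intervalIntegral.integral_sub hi₁ hi₂]
    calc |∫ σ in (0:ℝ)..z, (σ * N₁ σ / L₁ σ - σ * N₂ σ / L₂ σ)|
        ≤ ∫ σ in (0:ℝ)..z, |σ * N₁ σ / L₁ σ - σ * N₂ σ / L₂ σ| :=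
          intervalIntegral.abs_integral_le_integral_abs hz0
      _ ≤ ∫ σ in (0:ℝ)..z, σ * C :=
          intervalIntegral.integral_mono_on hz0 (hi₁.sub hi₂).abs hiC hdiff
      _ = z ^ 2 / 2 * C := by
          rw [intervalIntegral.integral_mul_const, integral_id]; ring
  rw [hI₁ z ⟨hz0, hzlam⟩, hI₂ z ⟨hz0, hzlam⟩]
  have hexp : |Real.exp (2 * ∫ σ in (0:ℝ)..z, σ * N₁ σ / L₁ σ)
      - Real.exp (2 * ∫ σ in (0:ℝ)..z, σ * N₂ σ / L₂ σ)|
      ≤ Real.exp (NM * z ^ 2 / Lm) *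
        |2 * (∫ σ in (0:ℝ)..z, σ * N₁ σ / L₁ σ) - 2 * ∫ σ in (0:ℝ)..z, σ * N₂ σ / L₂ σ| := by
    have hM : z ^ 2 / 2 * (NM / Lm) * 2 = NM * z ^ 2 / Lm := by ring
    apply abs_exp_sub_exp_le'
    · linarith [hb₁.2]
    · linarith [hb₂.2]
  refine hexp.trans ?_
  have h7 : |2 * (∫ σ in (0:ℝ)..z, σ * N₁ σ / L₁ σ) - 2 * ∫ σ in (0:ℝ)..z, σ * N₂ σ / L₂ σ|
      ≤ z ^ 2 * C := by
    have e : 2 * (∫ σ in (0:ℝ)..z, σ * N₁ σ / L₁ σ) - 2 * ∫ σ in (0:ℝ)..z, σ * N₂ σ / L₂ σ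
        = 2 * ((∫ σ in (0:ℝ)..z, σ * N₁ σ / L₁ σ) - ∫ σ in (0:ℝ)..z, σ * N₂ σ / L₂ σ) := by ring
    rw [e, abs_mul, abs_two]
    nlinarith [habs]
  calc Real.exp (NM * z ^ 2 / Lm) * |2 * (∫ σ in (0:ℝ)..z, σ * N₁ σ / L₁ σ)
        - 2 * ∫ σ in (0:ℝ)..z, σ * N₂ σ / L₂ σ|
      ≤ Real.exp (NM * z ^ 2 / Lm) * (z ^ 2 * C) :=
        mul_le_mul_of_nonneg_left h7 (Real.exp_pos _).le
    _ = Real.exp (NM * z ^ 2 / Lm) / Lm ^ 2 * z ^ 2 * (NM * Lt + Lm * Nt) * δ := by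
        rw [hC]; ring
end

section
/- Let $\mathrm{Ste}, N_M, N_m, L_m, L_M, \mu_M > 0$ and define for $\lambda > 0$: $\mathcal{V}_2(\lambda) = \frac{\mathrm{Ste}}{\sqrt{\pi}}\frac{\sqrt{N_M}}{\sqrt{L_m}} L_M \frac{\exp(2\lambda\mu_M/L_m - \lambda^2 N_m/L_M)}{\mathrm{erf}(\sqrt{N_M/L_m}\,\lambda)}$. Then $\mathcal{V}_2$ is continuous and positive on $(0,\infty)$, $\mathcal{V}_2(\lambda) \to +\infty$ as $\lambda \to 0^+$, and $\mathcal{V}_2(\lambda) \to 0$ as $\lambda \to +\infty$; consequently the equation $\mathcal{V}_2(\lambda) = \lambda$ has at least one positive solution. -/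
open Real Filter MeasureTheory Set Topology

lemma intInt (a b : ℝ) : IntervalIntegrable (fun t => Real.exp (-t ^ 2)) volume a b :=
  (Real.continuous_exp.comp (by continuity)).intervalIntegrable a b

lemma erf_cont : Continuous erf :=
  continuous_const.mul (intervalIntegral.continuous_primitive intInt 0)

lemma erf_pos {x : ℝ} (hx : 0 < x) : 0 < erf x := by
  have h1 : 0 < (2 / Real.sqrt Real.pi) := by positivity
  exact mul_pos h1 (intervalIntegral.intervalIntegral_pos_of_pos (intInt 0 x)
    (fun t => Real.exp_pos _) hx)

lemma erf_zero : erf 0 = 0 := by simp [erf]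

lemma erf_tendsto_one : Tendsto erf atTop (𝓝 1) := by
  have hi : IntegrableOn (fun t : ℝ => Real.exp (-t ^ 2)) (Ioi 0) volume := by
    have := (integrable_exp_neg_mul_sq (b := 1) one_pos).integrableOn (s := Ioi 0)
    simpa using this
  have h := intervalIntegral_tendsto_integral_Ioi 0 hi tendsto_id
  have hval : ∫ t in Ioi (0:ℝ), Real.exp (-t ^ 2) = Real.sqrt π / 2 := by
    have := integral_gaussian_Ioi 1
    simpa using this
  rw [hval] at h
  have : Tendsto erf atTop (𝓝 ((2 / Real.sqrt π) * (Real.sqrt π / 2))) :=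
    (h.const_mul _)
  convert this using 2
  have hπ : Real.sqrt π ≠ 0 := by positivity
  field_simp

theorem stmt_8 (Ste NM Nm Lm LM muM : ℝ)
    (hSte : 0 < Ste) (hNM : 0 < NM) (hNm : 0 < Nm) (hLm : 0 < Lm)
    (hLM : 0 < LM) (hmuM : 0 < muM)
    (V₂ : ℝ → ℝ)
    (hV₂ : ∀ lam, 0 < lam → V₂ lam =
      Ste / Real.sqrt Real.pi * (Real.sqrt NM / Real.sqrt Lm) * LM *
        (Real.exp (2 * lam * muM / Lm - lam ^ 2 * Nm / LM) /
          erf (Real.sqrt (NM / Lm) * lam))) :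
    ContinuousOn V₂ (Set.Ioi 0) ∧
    (∀ lam ∈ Set.Ioi (0:ℝ), 0 < V₂ lam) ∧
    Filter.Tendsto V₂ (nhdsWithin 0 (Set.Ioi 0)) Filter.atTop ∧
    Filter.Tendsto V₂ Filter.atTop (nhds 0) ∧
    (∃ lam : ℝ, 0 < lam ∧ V₂ lam = lam) := by
  set C : ℝ := Ste / Real.sqrt Real.pi * (Real.sqrt NM / Real.sqrt Lm) * LM with hCdef
  set c : ℝ := Real.sqrt (NM / Lm) with hcdef
  have hC : 0 < C := by positivity
  have hc : 0 < c := Real.sqrt_pos.mpr (by positivity)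
  set e : ℝ → ℝ := fun lam => 2 * lam * muM / Lm - lam ^ 2 * Nm / LM with hedef
  set F : ℝ → ℝ := fun lam => C * (Real.exp (e lam) / erf (c * lam)) with hFdef
  have hFeq : ∀ lam ∈ Ioi (0:ℝ), V₂ lam = F lam := fun lam hl => hV₂ lam hl
  have hcontE : Continuous e := by fun_prop
  have hcontF : ContinuousOn F (Ioi 0) := by
    apply continuousOn_const.mul
    apply ContinuousOn.div (hcontE.rexp.continuousOn)
      ((erf_cont.comp (continuous_const.mul continuous_id)).continuousOn)
    intro x hx
    exact ne_of_gt (erf_pos (mul_pos hc hx))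
  have hcontV : ContinuousOn V₂ (Ioi 0) := hcontF.congr hFeq
  have hpos : ∀ lam ∈ Ioi (0:ℝ), 0 < V₂ lam := by
    intro lam hl
    rw [hFeq lam hl]
    exact mul_pos hC (div_pos (Real.exp_pos _) (erf_pos (mul_pos hc hl)))
  -- limit at 0⁺
  have hnum : Tendsto (fun lam => C * Real.exp (e lam)) (𝓝[>] 0) (𝓝 C) := by
    have : Tendsto (fun lam => C * Real.exp (e lam)) (𝓝 0) (𝓝 (C * Real.exp (e 0))) :=
      (continuous_const.mul hcontE.rexp).tendsto 0
    have h0 : C * Real.exp (e 0) = C := by simp [hedef]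
    rw [h0] at this
    exact this.mono_left nhdsWithin_le_nhds
  have hden : Tendsto (fun lam => erf (c * lam)) (𝓝[>] 0) (𝓝[>] 0) := by
    apply tendsto_nhdsWithin_of_tendsto_nhds_of_eventually_within
    · have : Tendsto (fun lam => erf (c * lam)) (𝓝 0) (𝓝 (erf (c * 0))) :=
        (erf_cont.comp (continuous_const.mul continuous_id)).tendsto 0
      simpa [erf_zero] using (this.mono_left nhdsWithin_le_nhds)
    · filter_upwards [self_mem_nhdsWithin] with x hx
      exact erf_pos (mul_pos hc hx)
  have hlim0 : Tendsto V₂ (𝓝[>] 0) atTop := by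
    have hinv : Tendsto (fun lam => (erf (c * lam))⁻¹) (𝓝[>] 0) atTop :=
      tendsto_inv_nhdsGT_zero.comp hden
    have := hnum.pos_mul_atTop hC hinv
    apply this.congr'
    filter_upwards [self_mem_nhdsWithin] with x hx
    rw [hFeq x hx, hFdef]
    ring
  -- limit at ∞
  have hquad : Tendsto e atTop atBot := by
    have h1 : Tendsto (fun lam : ℝ => lam * (2 * muM / Lm - lam * (Nm / LM))) atTop atBot := by
      apply Tendsto.atTop_mul_atBot₀ tendsto_id
      have h2 : Tendsto (fun lam : ℝ => lam * (Nm / LM)) atTop atTop :=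
        tendsto_id.atTop_mul_const (by positivity)
      have := tendsto_atBot_add_const_left atTop (2 * muM / Lm) (tendsto_neg_atTop_atBot.comp h2)
      simpa [sub_eq_add_neg] using this
    apply h1.congr
    intro x; rw [hedef]; ring
  have hlimT : Tendsto V₂ atTop (𝓝 0) := by
    have hnum2 : Tendsto (fun lam => Real.exp (e lam)) atTop (𝓝 0) :=
      Real.tendsto_exp_atBot.comp hquad
    have hden2 : Tendsto (fun lam => erf (c * lam)) atTop (𝓝 1) :=
      erf_tendsto_one.comp (Tendsto.const_mul_atTop hc tendsto_id)
    have := (hnum2.div hden2 one_ne_zero).const_mul C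
    have h0 : C * (0 / 1) = 0 := by norm_num
    rw [h0] at this
    apply this.congr'
    filter_upwards [eventually_gt_atTop 0] with x hx
    exact (hFeq x hx).symm
  refine ⟨hcontV, hpos, hlim0, hlimT, ?_⟩
  -- fixed point via IVT
  have hev1 : ∀ᶠ x in 𝓝[>] (0:ℝ), V₂ x > x := by
    have h1 : ∀ᶠ x in 𝓝[>] (0:ℝ), V₂ x > 1 := hlim0.eventually_gt_atTop 1
    have h2 : ∀ᶠ x in 𝓝[>] (0:ℝ), x < 1 :=
      eventually_nhdsWithin_of_eventually_nhds (eventually_lt_nhds zero_lt_one)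
    filter_upwards [h1, h2] with x hx1 hx2
    linarith
  obtain ⟨a, ha1, ha0⟩ := (hev1.and self_mem_nhdsWithin).exists
  have hev2 : ∀ᶠ x in atTop, V₂ x < x := by
    have h1 : ∀ᶠ x in atTop, V₂ x < 1 := hlimT.eventually (eventually_lt_nhds zero_lt_one)
    filter_upwards [h1, eventually_ge_atTop (1:ℝ)] with x hx1 hx2
    linarith
  obtain ⟨b, hb1, hb2⟩ := (hev2.and (eventually_ge_atTop (max a 1))).exists
  have hab : a ≤ b := le_trans (le_max_left a 1) hb2
  have hb0 : 0 < b := lt_of_lt_of_le ha0 hab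
  have hsub : Icc a b ⊆ Ioi 0 := fun x hx => lt_of_lt_of_le ha0 hx.1
  have hg : ContinuousOn (fun x => V₂ x - x) (Icc a b) :=
    (hcontV.mono hsub).sub continuousOn_id
  have hivt := intermediate_value_Icc' hab hg
  have h0mem : (0:ℝ) ∈ Icc (V₂ b - b) (V₂ a - a) := ⟨by linarith, by linarith⟩
  obtain ⟨lam, hlam, hlameq⟩ := hivt h0mem
  exact ⟨lam, hsub hlam, by simpa [sub_eq_zero] using hlameq⟩
end

section
/- Let $\mathrm{Ste} > 0$ and $\mathrm{Pe} \in \mathbb{R}$. Define $g(\lambda) = \sqrt{\pi}\,\lambda\,\big(\mathrm{erf}(\mathrm{Pe}) - \mathrm{erf}(\mathrm{Pe}-\lambda)\big)\exp\big((\mathrm{Pe}-\lambda)^2\big)$ for $\lambda > 0$. Then $g$ is continuous with $g(0^+) = 0$ and $g(\lambda) \to +\infty$ as $\lambda \to +\infty$, so the equation $g(\lambda) = \mathrm{Ste}$ has at least one positive solution $\lambda$. -/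
theorem stmt_13 (Ste Pe : ℝ) (hSte : 0 < Ste)
    (g : ℝ → ℝ)
    (hg : ∀ lam, g lam =
      Real.sqrt Real.pi * lam * (erf Pe - erf (Pe - lam)) * Real.exp ((Pe - lam) ^ 2)) :
    Continuous g ∧
    Filter.Tendsto g (nhdsWithin 0 (Set.Ioi 0)) (nhds 0) ∧
    Filter.Tendsto g Filter.atTop Filter.atTop ∧
    (∃ lam : ℝ, 0 < lam ∧ g lam = Ste) := by
  have hπ : 0 < Real.sqrt Real.pi := Real.sqrt_pos.2 Real.pi_pos
  have hexp : Continuous fun t : ℝ => Real.exp (-t ^ 2) := by continuity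
  have hint : ∀ a b : ℝ, IntervalIntegrable (fun t => Real.exp (-t ^ 2)) MeasureTheory.volume a b :=
    fun a b => hexp.intervalIntegrable a b
  have herf : Continuous erf :=
    continuous_const.mul (intervalIntegral.continuous_primitive hint 0)
  have hcont : Continuous g := by
    rw [funext hg]
    exact ((continuous_const.mul continuous_id).mul
      (continuous_const.sub (herf.comp (continuous_const.sub continuous_id)))).mul
      ((continuous_const.sub continuous_id).pow 2).rexp
  have hg0 : g 0 = 0 := by rw [hg]; ring
  have hdiff : ∀ lam : ℝ, erf Pe - erf (Pe - lam) =
      (2 / Real.sqrt Real.pi) * ∫ t in (Pe - lam)..Pe, Real.exp (-t ^ 2) := by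
    intro lam
    unfold erf
    rw [← mul_sub, intervalIntegral.integral_interval_sub_left (hint 0 Pe) (hint 0 (Pe - lam))]
  set c : ℝ := ∫ t in (Pe - 1)..Pe, Real.exp (-t ^ 2) with hc_def
  have hc : 0 < c := by
    apply intervalIntegral.intervalIntegral_pos_of_pos_on (hint _ _)
    · intro x _; exact Real.exp_pos _
    · linarith
  have hlb : ∀ lam : ℝ, 1 ≤ lam → 2 * c * lam ≤ g lam := by
    intro lam hlam
    set I : ℝ := ∫ t in (Pe - lam)..Pe, Real.exp (-t ^ 2) with hI_def
    have hcle : c ≤ I := by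
      apply intervalIntegral.integral_mono_interval (by linarith) (by linarith) le_rfl
      · filter_upwards with x using (Real.exp_pos _).le
      · exact hint _ _
    have hE : (1 : ℝ) ≤ Real.exp ((Pe - lam) ^ 2) := Real.one_le_exp (sq_nonneg _)
    rw [hg, hdiff]
    have h2 : Real.sqrt Real.pi * lam * ((2 / Real.sqrt Real.pi) * I) = 2 * lam * I := by
      field_simp
    have hA : 0 ≤ Real.sqrt Real.pi * lam * ((2 / Real.sqrt Real.pi) * I) := by
      rw [h2]; nlinarith
    calc 2 * c * lam ≤ 2 * lam * I := by nlinarith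
      _ = Real.sqrt Real.pi * lam * ((2 / Real.sqrt Real.pi) * I) := h2.symm
      _ ≤ Real.sqrt Real.pi * lam * ((2 / Real.sqrt Real.pi) * I) * Real.exp ((Pe - lam) ^ 2) :=
          le_mul_of_one_le_right hA hE
  have htop : Filter.Tendsto g Filter.atTop Filter.atTop := by
    apply Filter.tendsto_atTop_mono' Filter.atTop (Filter.eventually_atTop.2 ⟨1, hlb⟩)
    exact Filter.Tendsto.const_mul_atTop (by positivity : (0:ℝ) < 2 * c) Filter.tendsto_id
  refine ⟨hcont, ?_, htop, ?_⟩
  · have h0 := hcont.tendsto 0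
    rw [hg0] at h0
    exact h0.mono_left nhdsWithin_le_nhds
  · obtain ⟨b, hbSte, hb1⟩ :=
      ((htop.eventually_ge_atTop Ste).and (Filter.eventually_ge_atTop (1:ℝ))).exists
    have hmem : Ste ∈ Set.Icc (g 0) (g b) := by rw [hg0]; exact ⟨hSte.le, hbSte⟩
    obtain ⟨lam, hlam, hglam⟩ :=
      intermediate_value_Icc (by linarith : (0:ℝ) ≤ b) hcont.continuousOn hmem
    refine ⟨lam, ?_, hglam⟩
    rcases hlam.1.lt_or_eq with h | h
    · exact h
    · exfalso; rw [← h, hg0] at hglam; linarith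
end

section
/- Let $c > 0$ and $\mathrm{Pe} \in \mathbb{R}$ with $\mathrm{Pe} \le \sqrt{2}$. Then the equation $\lambda \exp(\lambda^2 - 2\lambda\,\mathrm{Pe}) = c$ has exactly one solution $\lambda > 0$. -/
theorem stmt_14 (c Pe : ℝ) (hc : 0 < c) (hPe : Pe ≤ Real.sqrt 2) :
    ∃! lam : ℝ, 0 < lam ∧ lam * Real.exp (lam ^ 2 - 2 * lam * Pe) = c := by
  set f : ℝ → ℝ := fun l => l * Real.exp (l ^ 2 - 2 * l * Pe) with hf
  have hs2 : Real.sqrt 2 ^ 2 = 2 := Real.sq_sqrt (by norm_num)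
  have hs2pos : (0:ℝ) < Real.sqrt 2 := Real.sqrt_pos.2 (by norm_num)
  -- derivative
  have hd : ∀ x : ℝ, HasDerivAt f
      (Real.exp (x ^ 2 - 2 * x * Pe) * (1 + 2 * x ^ 2 - 2 * x * Pe)) x := by
    intro x
    have hg : HasDerivAt (fun l : ℝ => l ^ 2 - 2 * l * Pe) (2 * x - 2 * Pe) x := by
      have h1 : HasDerivAt (fun l : ℝ => l ^ 2) (2 * x) x := by simpa using hasDerivAt_pow 2 x
      have h2 : HasDerivAt (fun l : ℝ => 2 * l * Pe) (2 * Pe) x := by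
        simpa using (((hasDerivAt_id x).const_mul 2).mul_const Pe)
      exact h1.sub h2
    have he := hg.exp
    have : HasDerivAt f (1 * Real.exp (x ^ 2 - 2 * x * Pe) + id x * (Real.exp (x ^ 2 - 2 * x * Pe) * (2 * x - 2 * Pe))) x := (hasDerivAt_id x).mul he
    convert this using 1
    simp only [id_eq]
    ring
  have hcont : Continuous f := by
    apply Continuous.mul continuous_id
    exact (Real.continuous_exp.comp (by continuity))
  -- key positivity factor nonneg on x ≥ 0
  have hfac : ∀ x : ℝ, 0 ≤ x → 0 ≤ 1 + 2 * x ^ 2 - 2 * x * Pe := by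
    intro x hx
    nlinarith [sq_nonneg (Real.sqrt 2 * x - 1), mul_nonneg hx (sub_nonneg.2 hPe)]
  -- monotone on Ici 0
  have hmono : MonotoneOn f (Set.Ici 0) := by
    apply monotoneOn_of_deriv_nonneg (convex_Ici 0) hcont.continuousOn
    · intro x _
      exact (hd x).differentiableAt.differentiableWithinAt
    · intro x hx
      rw [interior_Ici] at hx
      rw [(hd x).deriv]
      exact mul_nonneg (Real.exp_pos _).le (hfac x hx.le)
  -- existence
  obtain ⟨lam, hlam⟩ : ∃ lam, 0 < lam ∧ f lam = c := by
    set M : ℝ := max c (2 * |Pe| + 1) with hM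
    have hM1 : c ≤ M := le_max_left _ _
    have hM2 : 2 * |Pe| + 1 ≤ M := le_max_right _ _
    have hMpos : 0 < M := lt_of_lt_of_le hc hM1
    have hfM : c ≤ f M := by
      have hexp : (1:ℝ) ≤ Real.exp (M ^ 2 - 2 * M * Pe) := by
        rw [Real.one_le_exp_iff]
        have hPa : Pe ≤ |Pe| := le_abs_self Pe
        nlinarith [abs_nonneg Pe]
      calc c ≤ M := hM1
        _ = M * 1 := (mul_one M).symm
        _ ≤ M * Real.exp (M ^ 2 - 2 * M * Pe) := by
            exact mul_le_mul_of_nonneg_left hexp hMpos.le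
    have h0 : f 0 = 0 := by simp [hf]
    have : c ∈ Set.Icc (f 0) (f M) := by
      rw [h0]; exact ⟨hc.le, hfM⟩
    obtain ⟨lam, hlmem, hlval⟩ := intermediate_value_Icc hMpos.le hcont.continuousOn this
    refine ⟨lam, ?_, hlval⟩
    rcases hlmem.1.lt_or_eq with h | h
    · exact h
    · exfalso; rw [← h, h0] at hlval; exact hc.ne hlval
  refine ⟨lam, ⟨hlam.1, hlam.2⟩, ?_⟩
  -- uniqueness
  rintro y ⟨hy, hyv⟩
  by_contra hne
  -- wlog a < b with f a = f b
  have key : ∀ a b : ℝ, 0 < a → a < b → f a = f b → False := by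
    intro a b ha hab heq
    -- f constant on [a,b]
    have hconst : ∀ x ∈ Set.Icc a b, f x = f a := by
      intro x hx
      have h1 : f a ≤ f x := hmono (le_of_lt ha) (le_trans ha.le hx.1) hx.1
      have h2 : f x ≤ f b := hmono (le_trans ha.le hx.1) (le_trans ha.le (hx.1.trans hx.2)) hx.2
      rw [← heq] at h2
      exact le_antisymm h2 h1
    have hderiv0 : ∀ x ∈ Set.Ioo a b, 1 + 2 * x ^ 2 - 2 * x * Pe = 0 := by
      intro x hx
      have hev : f =ᶠ[nhds x] fun _ => f a := by
        filter_upwards [Ioo_mem_nhds hx.1 hx.2] with z hz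
        exact hconst z ⟨hz.1.le, hz.2.le⟩
      have : deriv f x = 0 := by
        rw [hev.deriv_eq]; simp
      rw [(hd x).deriv] at this
      have := mul_eq_zero.1 this
      rcases this with h | h
      · exact absurd h (Real.exp_pos _).ne'
      · exact h
    set x1 : ℝ := a + (b - a) / 3 with hx1
    set x2 : ℝ := a + 2 * (b - a) / 3 with hx2
    have hab' : 0 < b - a := sub_pos.2 hab
    have hm1 : x1 ∈ Set.Ioo a b := ⟨by rw [hx1]; linarith, by rw [hx1]; linarith⟩
    have hm2 : x2 ∈ Set.Ioo a b := ⟨by rw [hx2]; linarith, by rw [hx2]; linarith⟩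
    have h1 := hderiv0 x1 hm1
    have h2 := hderiv0 x2 hm2
    have hx12 : x1 < x2 := by rw [hx1, hx2]; linarith
    have hx1pos : 0 < x1 := ha.trans hm1.1
    have hx2pos : 0 < x2 := ha.trans hm2.1
    -- subtracting the two quadratic relations gives x1 + x2 = Pe
    have hsum : x1 + x2 = Pe := by
      have hdiff : (x1 - x2) * (x1 + x2 - Pe) = 0 := by
        linear_combination (h1 - h2) / 2
      rcases mul_eq_zero.1 hdiff with h | h
      · exact absurd h (sub_ne_zero.2 hx12.ne)
      · linarith [sub_eq_zero.1 h]
    have hprod : 2 * (x1 * x2) = 1 := by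
      linear_combination -h1 + 2 * x1 * hsum
    have hPepos : 0 < Pe := by rw [← hsum]; positivity
    -- then Pe² = (x2-x1)² + 4 x1 x2 > 2, contradicting Pe ≤ √2
    nlinarith [sq_nonneg (x2 - x1), mul_pos (sub_pos.2 hx12) (sub_pos.2 hx12),
      mul_nonneg (sub_nonneg.2 hPe) (le_of_lt (add_pos hs2pos hPepos))]
  have heq : f lam = f y := hlam.2.trans hyv.symm
  rcases lt_trichotomy y lam with h | h | h
  · exact key y lam hy h heq.symm
  · exact hne h
  · exact key lam y hlam.1 h heq
end
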